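/- Let (X, μ) be a measure space, let p, q : X → ℝ be square-integrable, let a : X → ℝ satisfy a ≥ 0 almost everywhere, ∫ a dμ > 0, with a·q and a·q² integrable, and let λ₁ > 0 be a constant such that ∫ p² dμ ≥ λ₁ ∫ q² dμ. Then ∫ p² dμ + ∫ a·q² dμ − (∫ a·q dμ)²/(∫ a dμ) ≥ (λ₁/(1+λ₁))·(∫ p² dμ + ∫ q² dμ). -/

import Mathlib

open MeasureTheory

/-- The coercivity estimate (4.34) in the proof of Lemma 4.1. -/
theorem stmt_2 {X : Type*} [MeasurableSpace X] (μ : Measure X)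
    (p q a : X → ℝ) (lam : ℝ)
    (hp : MemLp p 2 μ) (hq : MemLp q 2 μ)
    (ha_int : Integrable a μ)
    (ha_nn : ∀ᵐ x ∂μ, 0 ≤ a x) (ha_pos : 0 < ∫ x, a x ∂μ)
    (haq : Integrable (fun x => a x * q x) μ)
    (haq2 : Integrable (fun x => a x * (q x) ^ 2) μ)
    (hlam : 0 < lam)
    (hpoinc : lam * ∫ x, (q x) ^ 2 ∂μ ≤ ∫ x, (p x) ^ 2 ∂μ) :
    (lam / (1 + lam)) * ((∫ x, (p x) ^ 2 ∂μ) + ∫ x, (q x) ^ 2 ∂μ) ≤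
      (∫ x, (p x) ^ 2 ∂μ) + (∫ x, a x * (q x) ^ 2 ∂μ) -
        (∫ x, a x * q x ∂μ) ^ 2 / (∫ x, a x ∂μ) := by
  set A := ∫ x, a x ∂μ with hA
  set I := ∫ x, a x * q x ∂μ with hI
  set J := ∫ x, a x * (q x) ^ 2 ∂μ with hJ
  set P := ∫ x, (p x) ^ 2 ∂μ with hP
  set Q := ∫ x, (q x) ^ 2 ∂μ with hQ
  -- Cauchy–Schwarz: I ^ 2 ≤ A * J
  have hJ_nn : 0 ≤ J := by
    refine integral_nonneg_of_ae ?_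
    filter_upwards [ha_nn] with x hx
    positivity
  have hCS : I ^ 2 ≤ A * J := by
    set f : X → ℝ := fun x => Real.sqrt (a x) with hf
    set g : X → ℝ := fun x => Real.sqrt (a x) * |q x| with hg
    have hf_meas : AEStronglyMeasurable f μ :=
      Real.continuous_sqrt.comp_aestronglyMeasurable ha_int.1
    have hg_meas : AEStronglyMeasurable g μ := hf_meas.mul hq.1.norm
    have hf2 : MemLp f 2 μ := by
      refine (memLp_two_iff_integrable_sq hf_meas).2 (ha_int.congr ?_)
      filter_upwards [ha_nn] with x hx
      simp [hf, Real.sq_sqrt hx]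
    have hg2 : MemLp g 2 μ := by
      refine (memLp_two_iff_integrable_sq hg_meas).2 (haq2.congr ?_)
      filter_upwards [ha_nn] with x hx
      simp [hg, mul_pow, Real.sq_sqrt hx, sq_abs]
    have hconj : Real.HolderConjugate 2 2 := by
      exact Real.HolderConjugate.two_two
    have h2 : (ENNReal.ofReal (2 : ℝ)) = 2 := by norm_num
    have holder := integral_mul_le_Lp_mul_Lq_of_nonneg hconj
      (f := f) (g := g)
      (Filter.Eventually.of_forall fun x => Real.sqrt_nonneg _)
      (Filter.Eventually.of_forall fun x => mul_nonneg (Real.sqrt_nonneg _) (abs_nonneg _))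
      (h2 ▸ hf2) (h2 ▸ hg2)
    simp only [Real.rpow_two] at holder
    have hfg : ∫ x, f x * g x ∂μ = ∫ x, a x * |q x| ∂μ := by
      refine integral_congr_ae ?_
      filter_upwards [ha_nn] with x hx
      show Real.sqrt (a x) * (Real.sqrt (a x) * |q x|) = a x * |q x|
      rw [← mul_assoc, Real.mul_self_sqrt hx]
    have hfsq : ∫ x, f x ^ 2 ∂μ = A := by
      refine integral_congr_ae ?_
      filter_upwards [ha_nn] with x hx
      simp [hf, Real.sq_sqrt hx]
    have hgsq : ∫ x, g x ^ 2 ∂μ = J := by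
      refine integral_congr_ae ?_
      filter_upwards [ha_nn] with x hx
      simp [hg, mul_pow, Real.sq_sqrt hx, sq_abs]
    rw [hfg, hfsq, hgsq] at holder
    have habs : |I| ≤ ∫ x, a x * |q x| ∂μ := by
      calc |I| = ‖I‖ := (Real.norm_eq_abs I).symm
        _ ≤ ∫ x, ‖a x * q x‖ ∂μ := norm_integral_le_integral_norm _
        _ = ∫ x, |a x * q x| ∂μ := by simp only [Real.norm_eq_abs]
        _ = ∫ x, a x * |q x| ∂μ := by
            refine integral_congr_ae ?_
            filter_upwards [ha_nn] with x hx
            rw [abs_mul, abs_of_nonneg hx]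
    have h1 : |I| ≤ A ^ (1/2 : ℝ) * J ^ (1/2 : ℝ) := le_trans habs holder
    have hA' : (0:ℝ) ≤ A := le_of_lt ha_pos
    have := mul_self_le_mul_self (abs_nonneg I) h1
    calc I ^ 2 = |I| * |I| := by rw [sq, abs_mul_abs_self]
      _ ≤ (A ^ (1/2:ℝ) * J ^ (1/2:ℝ)) * (A ^ (1/2:ℝ) * J ^ (1/2:ℝ)) := this
      _ = (A ^ (1/2:ℝ) * A ^ (1/2:ℝ)) * (J ^ (1/2:ℝ) * J ^ (1/2:ℝ)) := by ring
      _ = A * J := by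
          rw [← Real.rpow_add' hA' (by norm_num), ← Real.rpow_add' hJ_nn (by norm_num)]
          norm_num
  have hdiv : I ^ 2 / A ≤ J := by
    rw [div_le_iff₀ ha_pos]
    nlinarith
  have hmain : (lam / (1 + lam)) * (P + Q) ≤ P := by
    rw [div_mul_eq_mul_div, div_le_iff₀ (by linarith)]
    nlinarith
  linarith
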